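/- Let T_c be an edge contraction of a tree T (i.e., obtained by contracting a subset of edges of T). For any two edges e_i, e_j retained in T_c, if e_i is a dendrogram ancestor of e_j in T, then e_i is a dendrogram ancestor of e_j in T_c. -/

import Mathlib

open SimpleGraph

variable {V : Type*}

/-- The set of edges lying on the (unique) path between the edges `e` and `f`
of a tree `G`: the edges that belong to every walk traversing both `e` and
`f` (inclusive of `e` and `f` themselves). -/
def betweenEdges (G : SimpleGraph V) (e f : Sym2 V) : Set (Sym2 V) :=
  {g | g ∈ G.edgeSet ∧
    ∀ (a b : V) (p : G.Walk a b), e ∈ p.edges → f ∈ p.edges → g ∈ p.edges}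

/-- `f` is an ancestor of `e` (each edge being an ancestor of itself) in the
single-linkage dendrogram of the weighted tree `(G, w)`, built top-down by
recursively removing the heaviest edge of each connected component:
equivalently, `f` is the heaviest edge on the path between `e` and `f`. -/
def IsAncestor (G : SimpleGraph V) (w : Sym2 V → ℝ) (f e : Sym2 V) : Prop :=
  e ∈ G.edgeSet ∧ f ∈ G.edgeSet ∧ ∀ g ∈ betweenEdges G e f, w g ≤ w f

/-- The equivalence on vertices generated by identifying the endpoints of each
contracted edge (the edges of `G` belonging to `S`). -/
def contractSetoid (G : SimpleGraph V) (S : Set (Sym2 V)) : Setoid V :=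
  ⟨Relation.EqvGen (fun u v => G.Adj u v ∧ s(u, v) ∈ S),
    Relation.EqvGen.is_equivalence _⟩

/-- The tree obtained from `G` by contracting the edges in `S`: the surviving
edges are the edges of `G` not in `S`, viewed between the merged
supervertices. -/
def contractGraph (G : SimpleGraph V) (S : Set (Sym2 V)) :
    SimpleGraph (Quotient (contractSetoid G S)) where
  Adj x y := x ≠ y ∧ ∃ u v : V, Quotient.mk (contractSetoid G S) u = x ∧
      Quotient.mk (contractSetoid G S) v = y ∧ G.Adj u v ∧ s(u, v) ∉ S
  symm := by
    constructor
    rintro x y ⟨hxy, u, v, hu, hv, hadj, hS⟩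
    exact ⟨hxy.symm, v, u, hv, hu, hadj.symm, by rwa [Sym2.eq_swap]⟩
  loopless := ⟨fun x h => h.1 rfl⟩

/-- The image of an edge of `G` in the contracted tree. -/
def contractEdge (G : SimpleGraph V) (S : Set (Sym2 V)) :
    Sym2 V → Sym2 (Quotient (contractSetoid G S)) :=
  Sym2.map (Quotient.mk (contractSetoid G S))

section Aux

attribute [local instance] Classical.propDecidable

variable (G : SimpleGraph V) (S : Set (Sym2 V))

lemma contractEdge_mk (u v : V) : contractEdge G S s(u, v) =
    s(Quotient.mk (contractSetoid G S) u, Quotient.mk (contractSetoid G S) v) :=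
  Sym2.map_pair_eq _ _ _

/-- In an acyclic graph, every walk between adjacent vertices contains the connecting edge. -/
lemma aux_adj_edge_mem_walk (hG : G.IsAcyclic) {u v : V} (h : G.Adj u v)
    (q : G.Walk u v) : s(u, v) ∈ q.edges := by
  have huniq := hG.path_unique (SimpleGraph.Path.singleton h) q.toPath
  have hmem : s(u, v) ∈ (q.toPath : G.Walk u v).edges := by
    rw [← huniq]; exact SimpleGraph.Path.mk'_mem_edges_singleton h
  exact q.edges_toPath_subset hmem

/-- From equivalence in the contraction setoid, extract a walk whose edges all lie in `S`. -/
lemma aux_walk_of_eqvGen {u v : V}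
    (h : Relation.EqvGen (fun a b => G.Adj a b ∧ s(a, b) ∈ S) u v) :
    ∃ q : G.Walk u v, ∀ e ∈ q.edges, e ∈ S := by
  induction h with
  | rel a b hab => exact ⟨hab.1.toWalk, by simp [SimpleGraph.Adj.toWalk, hab.2]⟩
  | refl a => exact ⟨SimpleGraph.Walk.nil, by simp⟩
  | symm a b _ ih =>
    obtain ⟨q, hq⟩ := ih
    exact ⟨q.reverse, fun e he => hq e (by simpa using he)⟩
  | trans a b c _ _ ih1 ih2 =>
    obtain ⟨q1, hq1⟩ := ih1
    obtain ⟨q2, hq2⟩ := ih2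
    refine ⟨q1.append q2, fun e he => ?_⟩
    rw [SimpleGraph.Walk.edges_append, List.mem_append] at he
    exact he.elim (hq1 e) (hq2 e)

/-- Endpoints of a surviving edge map to distinct supervertices. -/
lemma aux_quot_ne (hG : G.IsAcyclic) {u v : V} (h : G.Adj u v) (hS : s(u, v) ∉ S)
    (heq : Quotient.mk (contractSetoid G S) u = Quotient.mk (contractSetoid G S) v) : False := by
  have hrel : Relation.EqvGen (fun a b => G.Adj a b ∧ s(a, b) ∈ S) u v := Quotient.exact heq
  obtain ⟨q, hq⟩ := aux_walk_of_eqvGen G S hrel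
  exact hS (hq _ (aux_adj_edge_mem_walk G hG h q))

/-- `contractEdge` is injective on surviving edges. -/
lemma aux_contractEdge_inj (hG : G.IsAcyclic) {u v : V} (huv : G.Adj u v)
    (huvS : s(u, v) ∉ S) {e : Sym2 V} (he : e ∈ G.edgeSet) (heS : e ∉ S)
    (h : contractEdge G S e = contractEdge G S s(u, v)) : e = s(u, v) := by
  revert he heS h
  refine Sym2.ind (fun a b he heS h => ?_) e
  have hab : G.Adj a b := he
  rw [contractEdge_mk, contractEdge_mk, Sym2.eq_iff] at h
  have main : ∀ (u' v' : V), G.Adj u' v' → s(u', v') ∉ S →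
      Quotient.mk (contractSetoid G S) a = Quotient.mk (contractSetoid G S) u' →
      Quotient.mk (contractSetoid G S) b = Quotient.mk (contractSetoid G S) v' →
      s(a, b) = s(u', v') := by
    intro u' v' huv' hS' hqa hqb
    obtain ⟨q1, hq1⟩ := aux_walk_of_eqvGen G S (Quotient.exact hqa)
    obtain ⟨q2, hq2⟩ := aux_walk_of_eqvGen G S (Quotient.exact hqb.symm)
    have hmem := aux_adj_edge_mem_walk G hG hab
      (q1.append (SimpleGraph.Walk.cons huv' q2))
    rw [SimpleGraph.Walk.edges_append, List.mem_append, SimpleGraph.Walk.edges_cons,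
      List.mem_cons] at hmem
    rcases hmem with h1 | h1 | h1
    · exact absurd (hq1 _ h1) heS
    · exact h1
    · exact absurd (hq2 _ h1) heS
  rcases h with ⟨h1, h2⟩ | ⟨h1, h2⟩
  · exact main u v huv huvS h1 h2
  · exact (main v u huv.symm (by rwa [Sym2.eq_swap]) h1 h2).trans Sym2.eq_swap

/-- Projection of a walk of `G` to the contracted graph. -/
noncomputable def projWalk : ∀ {a b : V}, G.Walk a b →
    (contractGraph G S).Walk (Quotient.mk (contractSetoid G S) a)
      (Quotient.mk (contractSetoid G S) b)
  | _, _, SimpleGraph.Walk.nil => SimpleGraph.Walk.nil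
  | a, _, SimpleGraph.Walk.cons (v := c) h q =>
    if hq : Quotient.mk (contractSetoid G S) a = Quotient.mk (contractSetoid G S) c then
      (projWalk q).copy hq.symm rfl
    else
      SimpleGraph.Walk.cons
        ⟨hq, a, c, rfl, rfl, h, fun hS' =>
          hq (Quotient.sound (Relation.EqvGen.rel _ _ ⟨h, hS'⟩))⟩ (projWalk q)

lemma projWalk_nil {a : V} : projWalk G S (SimpleGraph.Walk.nil : G.Walk a a) =
    SimpleGraph.Walk.nil := rfl

lemma projWalk_cons {a c b : V} (h : G.Adj a c) (q : G.Walk c b) :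
    projWalk G S (SimpleGraph.Walk.cons h q) =
    if hq : Quotient.mk (contractSetoid G S) a = Quotient.mk (contractSetoid G S) c then
      (projWalk G S q).copy hq.symm rfl
    else
      SimpleGraph.Walk.cons
        ⟨hq, a, c, rfl, rfl, h, fun hS' =>
          hq (Quotient.sound (Relation.EqvGen.rel _ _ ⟨h, hS'⟩))⟩ (projWalk G S q) := rfl

lemma aux_mem_projWalk (hG : G.IsAcyclic) {a b : V} (p : G.Walk a b) {e : Sym2 V}
    (he : e ∈ p.edges) (heS : e ∉ S) : contractEdge G S e ∈ (projWalk G S p).edges := by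
  induction p with
  | nil => simp at he
  | @cons x c y h q ih =>
    rw [SimpleGraph.Walk.edges_cons, List.mem_cons] at he
    rw [projWalk_cons]
    split_ifs with hq
    · rw [SimpleGraph.Walk.edges_copy]
      rcases he with rfl | he
      · exact (aux_quot_ne G S hG h heS hq).elim
      · exact ih he
    · erw [SimpleGraph.Walk.edges_cons, List.mem_cons]
      rcases he with rfl | he
      · left; rw [contractEdge_mk]
      · right; exact ih he

lemma aux_mem_of_projWalk {a b : V} (p : G.Walk a b) {e' : Sym2 (Quotient (contractSetoid G S))}
    (he' : e' ∈ (projWalk G S p).edges) :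
    ∃ e ∈ p.edges, e ∉ S ∧ contractEdge G S e = e' := by
  induction p with
  | nil => rw [projWalk_nil] at he'; simp at he'
  | @cons x c y h q ih =>
    rw [projWalk_cons] at he'
    split_ifs at he' with hq
    · rw [SimpleGraph.Walk.edges_copy] at he'
      obtain ⟨e, he1, he2, he3⟩ := ih he'
      exact ⟨e, by simp [he1], he2, he3⟩
    · erw [SimpleGraph.Walk.edges_cons, List.mem_cons] at he'
      rcases he' with rfl | he'
      · exact ⟨s(x, c), by simp,
          fun hS' => hq (Quotient.sound (Relation.EqvGen.rel _ _ ⟨h, hS'⟩)),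
          by rw [contractEdge_mk]⟩
      · obtain ⟨e, he1, he2, he3⟩ := ih he'
        exact ⟨e, by simp [he1], he2, he3⟩

end Aux

/-- Let `T_c` be an edge contraction of a tree `T` with distinct edge weights
(obtained by contracting the edges in `S`). For any two edges retained in
`T_c`, if `e_i` is a dendrogram ancestor of `e_j` in `T`, then `e_i` is also a
dendrogram ancestor of `e_j` in `T_c`. -/
theorem ancestor_of_contraction (G : SimpleGraph V) (hG : G.IsTree)
    (w : Sym2 V → ℝ) (hw : Set.InjOn w G.edgeSet)
    (S : Set (Sym2 V)) (hS : S ⊆ G.edgeSet)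
    (w' : Sym2 (Quotient (contractSetoid G S)) → ℝ)
    (hw' : ∀ e ∈ G.edgeSet, e ∉ S → w' (contractEdge G S e) = w e)
    (ei ej : Sym2 V) (hei : ei ∈ G.edgeSet) (hej : ej ∈ G.edgeSet)
    (hiS : ei ∉ S) (hjS : ej ∉ S)
    (hanc : IsAncestor G w ei ej) :
    IsAncestor (contractGraph G S) w' (contractEdge G S ei)
      (contractEdge G S ej) := by
  obtain ⟨a, b, rfl⟩ : ∃ a b, ei = s(a, b) := Sym2.exists.mp ⟨ei, rfl⟩
  obtain ⟨c, d, rfl⟩ : ∃ c d, ej = s(c, d) := Sym2.exists.mp ⟨ej, rfl⟩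
  have hab : G.Adj a b := hei
  have hcd : G.Adj c d := hej
  have hAc : G.IsAcyclic := hG.2
  obtain ⟨_, _, hmax⟩ := hanc
  refine ⟨?_, ?_, ?_⟩
  · rw [contractEdge_mk, SimpleGraph.mem_edgeSet]
    exact ⟨fun h => aux_quot_ne G S hAc hcd hjS h, c, d, rfl, rfl, hcd, hjS⟩
  · rw [contractEdge_mk, SimpleGraph.mem_edgeSet]
    exact ⟨fun h => aux_quot_ne G S hAc hab hiS h, a, b, rfl, rfl, hab, hiS⟩
  · intro g' hg'
    revert hg'
    refine Sym2.ind (fun x y hg' => ?_) g'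
    obtain ⟨hgE, hgB⟩ := hg'
    rw [SimpleGraph.mem_edgeSet] at hgE
    obtain ⟨hne, u, v, hu, hv, huv, hgS⟩ := hgE
    subst hu; subst hv
    have hkey : s(u, v) ∈ betweenEdges G s(c, d) s(a, b) := by
      refine ⟨huv, fun a' b' p hpj hpi => ?_⟩
      have h1 := aux_mem_projWalk G S hAc p hpj hjS
      have h2 := aux_mem_projWalk G S hAc p hpi hiS
      have h3 := hgB _ _ (projWalk G S p) h1 h2
      obtain ⟨e0, he0, he0S, he0e⟩ := aux_mem_of_projWalk G S p h3
      have he0uv : e0 = s(u, v) := by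
        refine aux_contractEdge_inj G S hAc huv hgS (p.edges_subset_edgeSet he0) he0S ?_
        rw [he0e, contractEdge_mk]
      rwa [he0uv] at he0
    have h1 : w' s(Quotient.mk (contractSetoid G S) u, Quotient.mk (contractSetoid G S) v)
        = w s(u, v) := by
      rw [← contractEdge_mk]
      exact hw' _ huv hgS
    rw [h1, hw' _ hei hiS]
    exact hmax _ hkey
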